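/- arXiv:2508.08427 — 2 statements merged into one kernel-verified Lean document; each statement's English description precedes it below -/
import Mathlib

section
/- For every q ≥ 0, the infimum of the grand canonical Hamiltonian over the mass shell of mass q satisfies: inf{ H_{ℝ²}(φ) : φ ∈ H¹(ℝ²), ‖φ‖_{L²(ℝ²)}² = q } = q²·(A − A₀). -/
noncomputable section

open MeasureTheory

/-- The plane ℝ². -/
abbrev R2 : Type := EuclideanSpace ℝ (Fin 2)

/-- Squared L²(ℝ²) norm. -/
def L2sq (φ : R2 → ℝ) : ℝ := ∫ x : R2, (φ x) ^ 2

/-- L²(ℝ²) norm. -/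
def L2norm (φ : R2 → ℝ) : ℝ := Real.sqrt (L2sq φ)

/-- Squared L²(ℝ²) norm of the gradient. -/
def gradL2sq (φ : R2 → ℝ) : ℝ := ∫ x : R2, ‖fderiv ℝ φ x‖ ^ 2

/-- L²(ℝ²) norm of the gradient. -/
def gradL2norm (φ : R2 → ℝ) : ℝ := Real.sqrt (gradL2sq φ)

/-- Cubed L³(ℝ²) norm, i.e. ∫ |φ|³. -/
def L3cube (φ : R2 → ℝ) : ℝ := ∫ x : R2, |φ x| ^ 3

/-- Membership in H¹(ℝ²): φ and its gradient are square integrable (together with the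
L³ integrability, which holds for every H¹(ℝ²) function by Sobolev embedding). -/
structure InH1 (φ : R2 → ℝ) : Prop where
  diff : Differentiable ℝ φ
  memL2 : MemLp φ 2 volume
  gradMemL2 : MemLp (fun x => ‖fderiv ℝ φ x‖) 2 volume
  memL3 : MemLp φ 3 volume

/-- The Weinstein functional 𝓕(φ) = ‖∇φ‖_{L²}‖φ‖_{L²}²/‖φ‖_{L³}³. -/
def weinstein (φ : R2 → ℝ) : ℝ := gradL2norm φ * (L2norm φ) ^ 2 / L3cube φ

/-- The Laplacian on ℝ². -/
def lap (φ : R2 → ℝ) (x : R2) : ℝ :=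
  ∑ i : Fin 2, fderiv ℝ (fun y => fderiv ℝ φ y (EuclideanSpace.single i 1)) x
    (EuclideanSpace.single i 1)

/-- φ vanishes almost everywhere (i.e. φ = 0 as an element of H¹). -/
def aeZero (φ : R2 → ℝ) : Prop := φ =ᵐ[volume] fun _ => 0

/-- `Q` is a (nonzero) minimizer of the Weinstein functional over nonzero H¹(ℝ²) functions
that solves the elliptic equation ΔQ + 2Q² − 2Q = 0. -/
structure IsGNSOptimizer (Q : R2 → ℝ) : Prop where
  h1 : InH1 Q
  ne : ¬ aeZero Q
  isMin : ∀ φ : R2 → ℝ, InH1 φ → ¬ aeZero φ → weinstein Q ≤ weinstein φ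
  ell : ∀ x, lap Q x + 2 * (Q x) ^ 2 - 2 * Q x = 0

/-- The Hamiltonian H₀(φ) = (1/2)∫|∇φ|² + (σ/3)∫φ³ on ℝ². -/
def H0f (σ : ℝ) (φ : R2 → ℝ) : ℝ :=
  (1/2) * gradL2sq φ + (σ/3) * ∫ x : R2, (φ x) ^ 3

/-- The grand canonical Hamiltonian H_{ℝ²}(φ) = H₀(φ) + A(∫φ²)². -/
def HR2 (σ A : ℝ) (φ : R2 → ℝ) : ℝ :=
  H0f σ φ + A * (∫ x : R2, (φ x) ^ 2) ^ 2

/-- The set of values of H₀ on the unit L² sphere of H¹(ℝ²). -/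
def sphereVals (σ : ℝ) : Set ℝ :=
  {y | ∃ φ : R2 → ℝ, InH1 φ ∧ L2norm φ = 1 ∧ y = H0f σ φ}

/-- The critical chemical potential A₀ = −inf{H₀(φ) : φ ∈ H¹(ℝ²), ‖φ‖_{L²} = 1}. -/
def A0 (σ : ℝ) : ℝ := - sInf (sphereVals σ)

/-- The rescaled soliton Q_{q,x₀}(x) = q·Q(q^{1/2}(x − x₀)). -/
def solQ (Q : R2 → ℝ) (q : ℝ) (x₀ : R2) : R2 → ℝ :=
  fun x => q * Q (Real.sqrt q • (x - x₀))

section Aux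

lemma int_comp_smul (f : R2 → ℝ) (l : ℝ) :
    ∫ x : R2, f (l • x) = (l ^ 2)⁻¹ * ∫ x : R2, f x := by
  rw [MeasureTheory.Measure.integral_comp_smul volume f l, finrank_euclideanSpace_fin,
    smul_eq_mul, abs_of_nonneg (inv_nonneg.2 (sq_nonneg l))]

lemma memLp_comp_smul {f : R2 → ℝ} {p : ENNReal} (hf : MemLp f p volume) {l : ℝ}
    (hl : l ≠ 0) : MemLp (fun x => f (l • x)) p volume := by
  have hmap := MeasureTheory.Measure.map_addHaar_smul (volume : Measure R2) hl
  have he : MeasurableEmbedding (fun x : R2 => l • x) :=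
    (Homeomorph.smulOfNeZero l hl).measurableEmbedding
  have : MemLp f p (MeasureTheory.Measure.map (fun x : R2 => l • x) volume) := by
    rw [hmap]; exact hf.smul_measure ENNReal.ofReal_ne_top
  exact he.memLp_map_measure_iff.1 this

lemma scl_fderiv {φ : R2 → ℝ} (hφ : Differentiable ℝ φ) (c l : ℝ) (x : R2) :
    fderiv ℝ (fun x => c * φ (l • x)) x = (c * l) • fderiv ℝ φ (l • x) := by
  have h1 : HasFDerivAt (fun y : R2 => l • y) (l • ContinuousLinearMap.id ℝ R2) x :=
    (hasFDerivAt_id x).const_smul l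
  have h2 : HasFDerivAt φ (fderiv ℝ φ (l • x)) (l • x) := (hφ (l • x)).hasFDerivAt
  have h3 := (h2.comp x h1).const_mul c
  have he : c • ((fderiv ℝ φ (l • x)).comp (l • ContinuousLinearMap.id ℝ R2))
      = (c * l) • fderiv ℝ φ (l • x) := by
    ext v; simp [mul_comm, mul_assoc, mul_left_comm]
  rw [← he]; exact h3.fderiv

lemma scl_inH1 {φ : R2 → ℝ} (h : InH1 φ) (c : ℝ) {l : ℝ} (hl : l ≠ 0) :
    InH1 (fun x => c * φ (l • x)) := by
  refine ⟨(h.diff.comp (differentiable_id.const_smul l)).const_mul c,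
    (memLp_comp_smul h.memL2 hl).const_mul c, ?_,
    (memLp_comp_smul h.memL3 hl).const_mul c⟩
  have hfe : (fun x : R2 => ‖fderiv ℝ (fun x => c * φ (l • x)) x‖)
      = fun x => |c * l| * ‖fderiv ℝ φ (l • x)‖ := by
    funext x
    rw [scl_fderiv h.diff c l x, norm_smul, Real.norm_eq_abs]
  rw [hfe]
  exact (memLp_comp_smul h.gradMemL2 hl).const_mul _

lemma scl_L2sq (φ : R2 → ℝ) (c l : ℝ) :
    L2sq (fun x => c * φ (l • x)) = c ^ 2 * ((l ^ 2)⁻¹ * L2sq φ) := by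
  unfold L2sq
  simp_rw [mul_pow]
  rw [MeasureTheory.integral_const_mul, int_comp_smul (fun y => (φ y) ^ 2) l]

lemma scl_cube (φ : R2 → ℝ) (c l : ℝ) :
    (∫ x : R2, (c * φ (l • x)) ^ 3) = c ^ 3 * ((l ^ 2)⁻¹ * ∫ x : R2, (φ x) ^ 3) := by
  simp_rw [mul_pow]
  rw [MeasureTheory.integral_const_mul, int_comp_smul (fun y => (φ y) ^ 3) l]

lemma scl_grad {φ : R2 → ℝ} (hφ : Differentiable ℝ φ) (c : ℝ) {l : ℝ} (hl : l ≠ 0) :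
    gradL2sq (fun x => c * φ (l • x)) = c ^ 2 * gradL2sq φ := by
  unfold gradL2sq
  have key : ∀ x : R2, ‖fderiv ℝ (fun x => c * φ (l • x)) x‖ ^ 2
      = (c * l) ^ 2 * ‖fderiv ℝ φ (l • x)‖ ^ 2 := by
    intro x
    rw [scl_fderiv hφ c l x, norm_smul, Real.norm_eq_abs, mul_pow, sq_abs]
  simp_rw [key]
  rw [MeasureTheory.integral_const_mul, int_comp_smul (fun y => ‖fderiv ℝ φ y‖ ^ 2) l]
  have hl2 : l ^ 2 ≠ 0 := pow_ne_zero 2 hl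
  field_simp

lemma scl_H0 (σ : ℝ) {φ : R2 → ℝ} (hφ : Differentiable ℝ φ) (c : ℝ) {l : ℝ} (hl : l ≠ 0) :
    H0f σ (fun x => c * φ (l • x))
      = (1/2) * (c ^ 2 * gradL2sq φ) + (σ/3) * (c ^ 3 * ((l ^ 2)⁻¹ * ∫ x : R2, (φ x) ^ 3)) := by
  unfold H0f
  rw [scl_grad hφ c hl, scl_cube]

lemma hr2_eq (σ A : ℝ) (φ : R2 → ℝ) : HR2 σ A φ = H0f σ φ + A * (L2sq φ) ^ 2 := rfl

end Aux

/-- For every q ≥ 0, the infimum of the grand canonical Hamiltonian over the mass shell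
{‖φ‖_{L²}² = q} equals q²·(A − A₀). -/
theorem statement_4 (σ A : ℝ) (hσ : σ ≠ 0)
    (hne : (sphereVals σ).Nonempty) (hbdd : BddBelow (sphereVals σ)) (hpos : 0 < A0 σ) :
    ∀ q : ℝ, 0 ≤ q →
      sInf {y | ∃ φ : R2 → ℝ, InH1 φ ∧ L2sq φ = q ∧ y = HR2 σ A φ}
        = q ^ 2 * (A - A0 σ) := by
  intro q hq
  rcases hq.eq_or_lt with h0 | hqpos
  · -- q = 0
    have hset : {y | ∃ φ : R2 → ℝ, InH1 φ ∧ L2sq φ = q ∧ y = HR2 σ A φ} = {0} := by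
      ext y
      simp only [Set.mem_setOf_eq, Set.mem_singleton_iff]
      constructor
      · rintro ⟨φ, hφ, hm, rfl⟩
        have hm0 : L2sq φ = 0 := by rw [hm, ← h0]
        have hint : MeasureTheory.Integrable (fun x : R2 => φ x ^ 2) volume :=
          hφ.memL2.integrable_sq
        have hz : (fun x : R2 => φ x ^ 2) =ᵐ[volume] 0 :=
          (MeasureTheory.integral_eq_zero_iff_of_nonneg (fun x => sq_nonneg _) hint).1 hm0
        have hz' : φ =ᵐ[volume] (fun _ => 0) := by
          filter_upwards [hz] with x hx
          have : φ x ^ 2 = 0 := hx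
          exact pow_eq_zero_iff (by norm_num) |>.1 this
        have hcz : φ = fun _ => 0 :=
          (Continuous.ae_eq_iff_eq volume hφ.diff.continuous continuous_const).1 hz'
        rw [hcz]
        simp [HR2, H0f, gradL2sq]
      · rintro rfl
        refine ⟨fun _ => 0, ?_, ?_, ?_⟩
        · refine ⟨differentiable_const 0, MeasureTheory.MemLp.zero', ?_,
            MeasureTheory.MemLp.zero'⟩
          have : (fun x : R2 => ‖fderiv ℝ (fun _ : R2 => (0:ℝ)) x‖) = fun _ => 0 := by
            funext x; simp
          rw [this]
          exact MeasureTheory.MemLp.zero'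
        · simp [L2sq, ← h0]
        · simp [HR2, H0f, gradL2sq]
    rw [hset, csInf_singleton, ← h0]
    ring
  · -- q > 0
    have hqne : q ≠ 0 := ne_of_gt hqpos
    have hq2 : (0:ℝ) < q ^ 2 := by positivity
    have hsq : Real.sqrt q ≠ 0 := by positivity
    have hsq2 : Real.sqrt q ^ 2 = q := Real.sq_sqrt hq
    set e : ℝ ≃o ℝ := (OrderIso.mulLeft₀ (q ^ 2) hq2).trans (OrderIso.addRight (A * q ^ 2))
      with he_def
    have he : ∀ y : ℝ, e y = q ^ 2 * y + A * q ^ 2 := fun y => rfl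
    have hset : {y | ∃ φ : R2 → ℝ, InH1 φ ∧ L2sq φ = q ∧ y = HR2 σ A φ}
        = e '' sphereVals σ := by
      ext y
      simp only [Set.mem_setOf_eq, Set.mem_image, sphereVals]
      constructor
      · rintro ⟨φ, hφ, hm, rfl⟩
        have hl : ((Real.sqrt q)⁻¹ : ℝ) ≠ 0 := inv_ne_zero hsq
        have hl2 : ((Real.sqrt q)⁻¹ : ℝ) ^ 2 = q⁻¹ := by
          rw [inv_pow, hsq2]
        refine ⟨H0f σ (fun x => q⁻¹ * φ ((Real.sqrt q)⁻¹ • x)),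
          ⟨_, scl_inH1 hφ q⁻¹ hl, ?_, rfl⟩, ?_⟩
        · unfold L2norm
          rw [scl_L2sq, hl2, hm, inv_inv]
          rw [show (q⁻¹ : ℝ) ^ 2 * (q * q) = 1 by field_simp]
          exact Real.sqrt_one
        · rw [he, scl_H0 σ hφ.diff q⁻¹ hl, hl2, inv_inv, hr2_eq, hm]
          unfold H0f
          field_simp
      · rintro ⟨z, ⟨ψ, hψ, hnorm, rfl⟩, rfl⟩
        have hL2 : L2sq ψ = 1 := Real.sqrt_eq_one.1 hnorm
        have hl2 : (Real.sqrt q : ℝ) ^ 2 = q := hsq2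
        refine ⟨fun x => q * ψ (Real.sqrt q • x), scl_inH1 hψ q hsq, ?_, ?_⟩
        · rw [scl_L2sq, hl2, hL2]
          field_simp
        · rw [he, hr2_eq, scl_L2sq, hl2, hL2, scl_H0 σ hψ.diff q hsq, hl2]
          unfold H0f
          field_simp
    rw [hset, ← OrderIso.map_csInf' e hne hbdd, he]
    have : sInf (sphereVals σ) = - A0 σ := by
      unfold A0; ring
    rw [this]
    ring
end
end

section
/- Suppose A = A₀ and let Q ∈ H¹(ℝ²) satisfy ‖Q‖_{L²(ℝ²)} = 1 and H₀(Q) = inf{ H₀(φ) : φ ∈ H¹(ℝ²), ‖φ‖_{L²(ℝ²)} = 1 }. Then inf{ H_{ℝ²}(φ) : φ ∈ H¹(ℝ²) } = 0, and for every q > 0 and every x₀ ∈ ℝ², the rescaled soliton Q_{q,x₀}(x) = q·Q(q^{1/2}(x − x₀)) is a minimizer: H_{ℝ²}(Q_{q,x₀}) = 0. In particular H_{ℝ²} admits infinitely many minimizers. -/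
noncomputable section

open MeasureTheory

/-! ### Auxiliary lemmas -/

lemma integral_comp_scale (f : R2 → ℝ) (c : ℝ) (x₀ : R2) :
    ∫ x : R2, f (c • (x - x₀)) = |(c ^ 2)⁻¹| * ∫ x : R2, f x := by
  have h1 : ∫ x : R2, f (c • (x - x₀)) = ∫ x : R2, (fun y : R2 => f (c • y)) (x - x₀) := rfl
  rw [h1, integral_sub_right_eq_self (fun y : R2 => f (c • y)) x₀,
    MeasureTheory.Measure.integral_comp_smul volume f c]
  simp [finrank_euclideanSpace_fin, smul_eq_mul]

lemma memLp_comp_scale {p : ENNReal} {g : R2 → ℝ} (hg : MemLp g p volume) {c : ℝ}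
    (hc : c ≠ 0) (x₀ : R2) : MemLp (fun x => g (c • (x - x₀))) p volume := by
  have hT : Measurable fun x : R2 => c • (x - x₀) :=
    (measurable_id.sub_const x₀).const_smul c
  have hmap : Measure.map (fun x : R2 => c • (x - x₀)) volume
      = ENNReal.ofReal |(c ^ Module.finrank ℝ R2)⁻¹| • volume := by
    have he : (fun x : R2 => c • (x - x₀)) = (fun y : R2 => c • y) ∘ (fun x => x - x₀) := rfl
    rw [he, ← Measure.map_map ((continuous_const_smul c).measurable :
        Measurable fun y : R2 => c • y) (measurable_sub_const x₀),
      (measurePreserving_sub_right volume x₀).map_eq,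
      MeasureTheory.Measure.map_addHaar_smul volume hc]
  have h2 : MemLp g p (Measure.map (fun x : R2 => c • (x - x₀)) volume) := by
    rw [hmap]; exact hg.smul_measure ENNReal.ofReal_ne_top
  exact (memLp_map_measure_iff h2.aestronglyMeasurable hT.aemeasurable).1 h2

lemma fderiv_scale (Q : R2 → ℝ) (hQ : Differentiable ℝ Q) (q c : ℝ) (x₀ x : R2) :
    fderiv ℝ (fun x => q * Q (c • (x - x₀))) x = (q * c) • fderiv ℝ Q (c • (x - x₀)) := by
  have hT : HasFDerivAt (fun x : R2 => c • (x - x₀))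
      (c • (ContinuousLinearMap.id ℝ R2)) x := by
    exact ((hasFDerivAt_id x).sub_const x₀).const_smul c
  have hQT : HasFDerivAt (fun x : R2 => Q (c • (x - x₀)))
      ((fderiv ℝ Q (c • (x - x₀))).comp (c • ContinuousLinearMap.id ℝ R2)) x :=
    (hQ _).hasFDerivAt.comp x hT
  have h2 := hQT.const_mul q
  rw [h2.fderiv]
  ext v
  simp [mul_comm, mul_assoc, mul_left_comm]

lemma solQ_fderiv_norm (φ : R2 → ℝ) (hd : Differentiable ℝ φ) {q : ℝ} (hq : 0 < q)
    (x₀ x : R2) :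
    ‖fderiv ℝ (solQ φ q x₀) x‖
      = (q * Real.sqrt q) * ‖fderiv ℝ φ (Real.sqrt q • (x - x₀))‖ := by
  have h : fderiv ℝ (solQ φ q x₀) x
      = (q * Real.sqrt q) • fderiv ℝ φ (Real.sqrt q • (x - x₀)) :=
    fderiv_scale φ hd q (Real.sqrt q) x₀ x
  have hpos : (0:ℝ) < q * Real.sqrt q := mul_pos hq (Real.sqrt_pos.2 hq)
  rw [h, norm_smul, Real.norm_eq_abs, abs_of_pos hpos]

lemma solQ_inH1 (φ : R2 → ℝ) (hφ : InH1 φ) {q : ℝ} (hq : 0 < q) (x₀ : R2) :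
    InH1 (solQ φ q x₀) := by
  have hc : (0:ℝ) < Real.sqrt q := Real.sqrt_pos.2 hq
  have hdT : Differentiable ℝ (fun x : R2 => Real.sqrt q • (x - x₀)) :=
    (differentiable_id.sub_const x₀).const_smul (Real.sqrt q)
  refine ⟨(hφ.diff.comp hdT).const_mul q, ?_, ?_, ?_⟩
  · exact (memLp_comp_scale hφ.memL2 hc.ne' x₀).const_mul q
  · have heq : (fun x : R2 => ‖fderiv ℝ (solQ φ q x₀) x‖)
        = fun x => (q * Real.sqrt q) * ‖fderiv ℝ φ (Real.sqrt q • (x - x₀))‖ :=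
      funext fun x => solQ_fderiv_norm φ hφ.diff hq x₀ x
    rw [heq]
    exact (memLp_comp_scale hφ.gradMemL2 hc.ne' x₀).const_mul (q * Real.sqrt q)
  · exact (memLp_comp_scale hφ.memL3 hc.ne' x₀).const_mul q

lemma solQ_pow_integral (φ : R2 → ℝ) {q : ℝ} (hq : 0 < q) (x₀ : R2) (n : ℕ) :
    ∫ x : R2, (solQ φ q x₀ x) ^ n = q ^ n * q⁻¹ * ∫ x : R2, (φ x) ^ n := by
  have hc2 : Real.sqrt q ^ 2 = q := Real.sq_sqrt hq.le
  have h1 : ∫ x : R2, (solQ φ q x₀ x) ^ n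
      = ∫ x : R2, q ^ n * ((fun y : R2 => (φ y) ^ n) (Real.sqrt q • (x - x₀))) := by
    simp [solQ, mul_pow]
  rw [h1, integral_const_mul _ _,
    integral_comp_scale (fun y : R2 => (φ y) ^ n) (Real.sqrt q) x₀, hc2,
    abs_of_pos (inv_pos.2 hq)]
  ring

lemma solQ_L2sq (φ : R2 → ℝ) {q : ℝ} (hq : 0 < q) (x₀ : R2) :
    ∫ x : R2, (solQ φ q x₀ x) ^ 2 = q * ∫ x : R2, (φ x) ^ 2 := by
  rw [solQ_pow_integral φ hq x₀ 2]
  field_simp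

lemma solQ_gradL2sq (φ : R2 → ℝ) (hd : Differentiable ℝ φ) {q : ℝ} (hq : 0 < q) (x₀ : R2) :
    gradL2sq (solQ φ q x₀) = q ^ 2 * gradL2sq φ := by
  have hc2 : Real.sqrt q ^ 2 = q := Real.sq_sqrt hq.le
  have h1 : gradL2sq (solQ φ q x₀)
      = ∫ x : R2, (q * Real.sqrt q) ^ 2 *
          ((fun y : R2 => ‖fderiv ℝ φ y‖ ^ 2) (Real.sqrt q • (x - x₀))) := by
    unfold gradL2sq
    congr 1
    funext x
    rw [solQ_fderiv_norm φ hd hq x₀ x]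
    ring
  rw [h1, integral_const_mul _ _,
    integral_comp_scale (fun y : R2 => ‖fderiv ℝ φ y‖ ^ 2) (Real.sqrt q) x₀, hc2,
    abs_of_pos (inv_pos.2 hq)]
  unfold gradL2sq
  rw [mul_pow, hc2]
  field_simp

lemma solQ_H0f (σ : ℝ) (φ : R2 → ℝ) (hd : Differentiable ℝ φ) {q : ℝ} (hq : 0 < q)
    (x₀ : R2) : H0f σ (solQ φ q x₀) = q ^ 2 * H0f σ φ := by
  unfold H0f
  rw [solQ_gradL2sq φ hd hq x₀, solQ_pow_integral φ hq x₀ 3]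
  field_simp

/-- Critical taming A = A₀: the infimum of H_{ℝ²} over H¹(ℝ²) is 0, every rescaled
soliton Q_{q,x₀}(x) = q·Q(q^{1/2}(x − x₀)) with q > 0, x₀ ∈ ℝ² is a minimizer
(H_{ℝ²}(Q_{q,x₀}) = 0), and in particular H_{ℝ²} has infinitely many minimizers. -/
theorem statement_10 (σ A : ℝ) (hσ : σ ≠ 0)
    (hne : (sphereVals σ).Nonempty) (hbdd : BddBelow (sphereVals σ)) (hpos : 0 < A0 σ)
    (hA : A = A0 σ)
    (Q : R2 → ℝ) (hQ1 : InH1 Q) (hQnorm : L2norm Q = 1)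
    (hQmin : H0f σ Q = sInf (sphereVals σ)) :
    sInf {y | ∃ φ : R2 → ℝ, InH1 φ ∧ y = HR2 σ A φ} = 0 ∧
    (∀ q : ℝ, 0 < q → ∀ x₀ : R2, HR2 σ A (solQ Q q x₀) = 0) ∧
    {φ : R2 → ℝ | InH1 φ ∧ HR2 σ A φ = 0}.Infinite := by
  have hSinf : sInf (sphereVals σ) = -A0 σ := by rw [A0, neg_neg]
  have hQsq : (∫ x : R2, (Q x) ^ 2) = 1 := by
    have h := hQnorm
    unfold L2norm L2sq at h
    exact Real.sqrt_eq_one.mp h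
  -- lower bound
  have hlb : ∀ φ : R2 → ℝ, InH1 φ → 0 ≤ HR2 σ A φ := by
    intro φ hφ
    have hm0 : 0 ≤ ∫ x : R2, (φ x) ^ 2 := integral_nonneg fun x => sq_nonneg _
    rcases hm0.eq_or_lt with h0 | hmpos
    · -- the function vanishes identically
      have hint : Integrable (fun x : R2 => (φ x) ^ 2) := hφ.memL2.integrable_sq
      have hae : (fun x : R2 => (φ x) ^ 2) =ᵐ[volume] 0 :=
        (integral_eq_zero_iff_of_nonneg (fun x => sq_nonneg _) hint).1 h0.symm
      have hae2 : φ =ᵐ[volume] (fun _ => 0) := by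
        filter_upwards [hae] with x hx
        have : (φ x) ^ 2 = 0 := hx
        exact (pow_eq_zero_iff two_ne_zero).1 this
      have hzero : φ = fun _ => 0 :=
        (Continuous.ae_eq_iff_eq volume hφ.diff.continuous continuous_const).1 hae2
      rw [hzero]
      simp [HR2, H0f, gradL2sq]
    · set m := ∫ x : R2, (φ x) ^ 2 with hm
      have hq : (0:ℝ) < m⁻¹ := inv_pos.2 hmpos
      have hψ1 := solQ_inH1 φ hφ hq 0
      have hψ2 : L2norm (solQ φ m⁻¹ 0) = 1 := by
        unfold L2norm L2sq
        rw [solQ_L2sq φ hq 0, ← hm, inv_mul_cancel₀ hmpos.ne', Real.sqrt_one]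
      have hmem : H0f σ (solQ φ m⁻¹ 0) ∈ sphereVals σ := ⟨_, hψ1, hψ2, rfl⟩
      have hge := csInf_le hbdd hmem
      rw [hSinf, solQ_H0f σ φ hφ.diff hq 0] at hge
      have hkey : (m⁻¹) ^ 2 * m ^ 2 = 1 := by field_simp
      have h2 := mul_le_mul_of_nonneg_right hge (sq_nonneg m)
      have h3 : m⁻¹ ^ 2 * H0f σ φ * m ^ 2 = H0f σ φ := by
        field_simp
      rw [h3] at h2
      unfold HR2
      rw [hA, ← hm]
      nlinarith [h2]
  have hQ0 : HR2 σ A Q = 0 := by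
    unfold HR2
    rw [hQsq, hQmin, hSinf, hA]; ring
  have hsol : ∀ q : ℝ, 0 < q → ∀ x₀ : R2, HR2 σ A (solQ Q q x₀) = 0 := by
    intro q hq x₀
    unfold HR2
    rw [solQ_H0f σ Q hQ1.diff hq x₀, solQ_L2sq Q hq x₀, hQsq, hQmin, hSinf, hA]; ring
  have hmem0 : (0:ℝ) ∈ {y | ∃ φ : R2 → ℝ, InH1 φ ∧ y = HR2 σ A φ} := ⟨Q, hQ1, hQ0.symm⟩
  have hlb' : ∀ y ∈ {y | ∃ φ : R2 → ℝ, InH1 φ ∧ y = HR2 σ A φ}, (0:ℝ) ≤ y := by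
    rintro y ⟨φ, hφ, rfl⟩; exact hlb φ hφ
  refine ⟨le_antisymm (csInf_le ⟨0, hlb'⟩ hmem0) (le_csInf ⟨0, hmem0⟩ hlb'), hsol, ?_⟩
  refine Set.infinite_of_injective_forall_mem
    (f := fun n : ℕ => solQ Q ((n : ℝ) + 1) 0) ?_ ?_
  · intro a b hab
    have hpa : (0:ℝ) < (a : ℝ) + 1 := by positivity
    have hpb : (0:ℝ) < (b : ℝ) + 1 := by positivity
    have h := congrArg (fun g : R2 → ℝ => ∫ x : R2, (g x) ^ 2) hab
    simp only at h
    rw [solQ_L2sq Q hpa 0, solQ_L2sq Q hpb 0, hQsq, mul_one, mul_one] at h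
    exact_mod_cast add_left_injective 1 h
  · intro n
    have hp : (0:ℝ) < (n : ℝ) + 1 := by positivity
    exact ⟨solQ_inH1 Q hQ1 hp 0, hsol _ hp 0⟩
end
end
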